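/- Let g > 0, α, β ∈ ℝ with β ≠ 0, z̄_b ∈ ℝ, and let h₀ : ℝ → ℝ be C¹ with 0 < β h₀(x) < π for all x (so sin(β h₀(x)) > 0). Define z_b(x) := z̄_b − h₀(x) − α²β²/(2g sin²(β h₀(x))), η(x) := z_b(x) + h₀(x), u(x,z) := α β cos(β (z − z_b(x))) / sin(β h₀(x)), v := 0, and w(x,z) := α β ( z_b'(x) cos(β(z − z_b(x)))/sin(β h₀(x)) + h₀'(x) sin(β(z − z_b(x))) cos(β h₀(x))/sin²(β h₀(x)) ). Then, for all x and all z with z_b(x) ≤ z ≤ η(x): (i) ∂_x u + ∂_z w = 0; (ii) u ∂_x u + w ∂_z u + g ∂_x η = 0; (iii) w = u z_b'(x) at z = z_b(x), and u ∂_x η = w at z = η(x). Hence (h₀, u, v, w) is a stationary solution of the incompressible hydrostatic Euler system with free surface (with zero atmospheric pressure) that is independent of y. -/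

import Mathlib

open Real

/-- the stationary analytical solution of the incompressible
hydrostatic Euler system with free surface. -/
theorem stmt15 (g α β zbbar : ℝ) (hg : 0 < g) (hβ : β ≠ 0)
    (h0 : ℝ → ℝ) (hh0C1 : ContDiff ℝ 1 h0)
    (hh0 : ∀ x, 0 < β * h0 x ∧ β * h0 x < Real.pi)
    (zb : ℝ → ℝ)
    (hzb : ∀ x, zb x = zbbar - h0 x - α ^ 2 * β ^ 2 / (2 * g * Real.sin (β * h0 x) ^ 2))
    (η : ℝ → ℝ) (hη : ∀ x, η x = zb x + h0 x)
    (u : ℝ → ℝ → ℝ)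
    (hu : ∀ x z, u x z = α * β * Real.cos (β * (z - zb x)) / Real.sin (β * h0 x))
    (w : ℝ → ℝ → ℝ)
    (hw : ∀ x z, w x z
      = α * β * (deriv zb x * Real.cos (β * (z - zb x)) / Real.sin (β * h0 x)
        + deriv h0 x * Real.sin (β * (z - zb x)) * Real.cos (β * h0 x)
            / Real.sin (β * h0 x) ^ 2)) :
    ∀ x z : ℝ, zb x ≤ z → z ≤ η x →
      -- (i) incompressibility
      (deriv (fun s => u s z) x + deriv (fun s => w x s) z = 0) ∧
      -- (ii) stationary horizontal momentum equation
      (u x z * deriv (fun s => u s z) x + w x z * deriv (fun s => u x s) z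
        + g * deriv η x = 0) ∧
      -- (iii) bottom impermeability and kinematic free-surface conditions
      (w x (zb x) = u x (zb x) * deriv zb x) ∧
      (u x (η x) * deriv η x = w x (η x)) := by
  have hzbf : zb = fun x => zbbar - h0 x - α ^ 2 * β ^ 2 / (2 * g * Real.sin (β * h0 x) ^ 2) :=
    funext hzb
  have hηf : η = fun x => zb x + h0 x := funext hη
  intro x z _ _
  have hd : HasDerivAt h0 (deriv h0 x) x := ((hh0C1.differentiable one_ne_zero) x).hasDerivAt
  set D := deriv h0 x with hDdef
  have hSpos : 0 < Real.sin (β * h0 x) := Real.sin_pos_of_pos_of_lt_pi (hh0 x).1 (hh0 x).2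
  have hS0 : Real.sin (β * h0 x) ≠ 0 := ne_of_gt hSpos
  set S := Real.sin (β * h0 x) with hSdef
  set C := Real.cos (β * h0 x) with hCdef
  have hg' : g ≠ 0 := ne_of_gt hg
  have h1 : HasDerivAt (fun s => β * h0 s) (β * D) x := hd.const_mul β
  have hSx : HasDerivAt (fun s => Real.sin (β * h0 s)) (C * (β * D)) x := h1.sin
  have hden : HasDerivAt (fun s => 2 * g * Real.sin (β * h0 s) ^ 2)
      (2 * g * ((2 : ℕ) * S ^ 1 * (C * (β * D)))) x := (hSx.pow 2).const_mul (2 * g)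
  have hdenne : 2 * g * S ^ 2 ≠ 0 := by positivity
  have hfrac : HasDerivAt (fun s => α ^ 2 * β ^ 2 / (2 * g * Real.sin (β * h0 s) ^ 2))
      ((0 * (2 * g * S ^ 2) - α ^ 2 * β ^ 2 * (2 * g * ((2 : ℕ) * S ^ 1 * (C * (β * D)))))
        / (2 * g * S ^ 2) ^ 2) x :=
    (hasDerivAt_const x (α ^ 2 * β ^ 2)).div hden hdenne
  set Z : ℝ := -D + α ^ 2 * β ^ 3 * D * C / (g * S ^ 3) with hZdef
  have hzbd : HasDerivAt zb Z x := by
    have h2 : HasDerivAt zb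
        (0 - D - (0 * (2 * g * S ^ 2) - α ^ 2 * β ^ 2 * (2 * g * ((2 : ℕ) * S ^ 1 * (C * (β * D)))))
          / (2 * g * S ^ 2) ^ 2) x := by
      rw [hzbf]
      exact ((hasDerivAt_const x zbbar).sub hd).sub hfrac
    have : (0 - D - (0 * (2 * g * S ^ 2) - α ^ 2 * β ^ 2 * (2 * g * ((2 : ℕ) * S ^ 1 * (C * (β * D)))))
        / (2 * g * S ^ 2) ^ 2) = Z := by
      rw [hZdef]; field_simp; ring
    rwa [this] at h2
  have hZval : deriv zb x = Z := hzbd.deriv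
  have hηd : HasDerivAt η (Z + D) x := by rw [hηf]; exact hzbd.add hd
  have hηval : deriv η x = Z + D := hηd.deriv
  set c := Real.cos (β * (z - zb x)) with hcdef
  set s' := Real.sin (β * (z - zb x)) with hsdef
  have hpy : s' ^ 2 + c ^ 2 = 1 := Real.sin_sq_add_cos_sq _
  -- ∂_x u
  have huf : (fun s => u s z) = fun s => α * β * Real.cos (β * (z - zb s)) / Real.sin (β * h0 s) :=
    funext fun s => hu s z
  have hinner : HasDerivAt (fun s => β * (z - zb s)) (β * (0 - Z)) x :=
    ((hasDerivAt_const x z).sub hzbd).const_mul β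
  have hux : HasDerivAt (fun s => u s z)
      ((α * β * (-s' * (β * (0 - Z))) * S - α * β * c * (C * (β * D))) / S ^ 2) x := by
    rw [huf]
    exact ((hinner.cos).const_mul (α * β)).div hSx hS0
  have huxval : deriv (fun s => u s z) x
      = (α * β * (-s' * (β * (0 - Z))) * S - α * β * c * (C * (β * D))) / S ^ 2 := hux.deriv
  -- ∂_z u
  have hufz : (fun s => u x s) = fun s => α * β * Real.cos (β * (s - zb x)) / S :=
    funext fun s => hu x s
  have hinnz : HasDerivAt (fun s => β * (s - zb x)) (β * (1 - 0)) z :=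
    ((hasDerivAt_id z).sub (hasDerivAt_const z (zb x))).const_mul β
  have huz : HasDerivAt (fun s => u x s) (α * β * (-s' * (β * (1 - 0))) / S) z := by
    rw [hufz]
    exact ((hinnz.cos).const_mul (α * β)).div_const S
  have huzval : deriv (fun s => u x s) z = α * β * (-s' * (β * (1 - 0))) / S := huz.deriv
  -- ∂_z w
  have hwfz : (fun s => w x s)
      = fun s => α * β * (Z * Real.cos (β * (s - zb x)) / S
        + D * Real.sin (β * (s - zb x)) * C / S ^ 2) :=
    funext fun s => by rw [hw x s, hZval]
  have hwz : HasDerivAt (fun s => w x s)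
      (α * β * (Z * (-s' * (β * (1 - 0))) / S + D * (c * (β * (1 - 0))) * C / S ^ 2)) z := by
    rw [hwfz]
    exact ((((hinnz.cos).const_mul Z).div_const S).add
      ((((hinnz.sin).const_mul D).mul_const C).div_const (S ^ 2))).const_mul (α * β)
  have hwzval : deriv (fun s => w x s) z
      = α * β * (Z * (-s' * (β * (1 - 0))) / S + D * (c * (β * (1 - 0))) * C / S ^ 2) := hwz.deriv
  refine ⟨?_, ?_, ?_, ?_⟩
  · rw [huxval, hwzval]; field_simp; ring
  · have e1 : u x z * deriv (fun s => u s z) x + w x z * deriv (fun s => u x s) z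
        = -(α ^ 2 * β ^ 3 * D * C * (s' ^ 2 + c ^ 2)) / S ^ 3 := by
      rw [huxval, huzval, hu x z, hw x z, hZval]
      simp only [← hSdef, ← hCdef, ← hcdef, ← hsdef, ← hDdef]
      field_simp
      ring
    rw [e1, hpy, hηval, hZdef]
    field_simp
    ring
  · rw [hw x (zb x), hu x (zb x), hZval]
    simp
    ring
  · rw [hw x (η x), hu x (η x), hηval, hη x, hZval]
    have h3 : β * (zb x + h0 x - zb x) = β * h0 x := by ring_nf
    rw [h3]
    field_simp
    ring
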